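/- Let N ≥ 2 be an integer, 0 < r < 1, 0 < ρ ≤ 1, and 0 ≤ 1 - Nr ≤ 1 - r (i.e., p ≥ r where p = 1-(N-1)r). Suppose a sequence W(n) satisfies W(n+1) - W(n) = (nρ+1)·[(1-r)^(n+2) - (1-Nr)^(n+2)] + (nρ+1)(1-ρ)r/(1-(1-ρ)(1-r))·[N(1-Nr)^(n+2) - (1-r)^(n+2)]. Then W(n+1) - W(n) ≥ (nρ+1)·(ρ/(1-(1-ρ)(1-r)))·[(1-r)^(n+2) - (1-Nr)^(n+2)] ≥ 0; in particular W is nondecreasing in n. -/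

import Mathlib

theorem stmt13 (N : ℕ) (r ρ : ℝ) (hN : 2 ≤ N) (hr : 0 < r) (hr1 : r < 1)
    (hρ : 0 < ρ) (hρ1 : ρ ≤ 1)
    (hNr0 : 0 ≤ 1 - (N : ℝ) * r) (hNr1 : 1 - (N : ℝ) * r ≤ 1 - r)
    (W : ℕ → ℝ)
    (hW : ∀ n : ℕ, W (n + 1) - W n =
      ((n : ℝ) * ρ + 1) * ((1 - r) ^ (n + 2) - (1 - N * r) ^ (n + 2)) +
      ((n : ℝ) * ρ + 1) * (1 - ρ) * r / (1 - (1 - ρ) * (1 - r)) *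
        ((N : ℝ) * (1 - N * r) ^ (n + 2) - (1 - r) ^ (n + 2))) :
    ∀ n : ℕ,
      W (n + 1) - W n ≥
        ((n : ℝ) * ρ + 1) * (ρ / (1 - (1 - ρ) * (1 - r))) *
          ((1 - r) ^ (n + 2) - (1 - N * r) ^ (n + 2)) ∧
      ((n : ℝ) * ρ + 1) * (ρ / (1 - (1 - ρ) * (1 - r))) *
          ((1 - r) ^ (n + 2) - (1 - N * r) ^ (n + 2)) ≥ 0 ∧
      W n ≤ W (n + 1) := by
  intro n
  have hD : 0 < 1 - (1 - ρ) * (1 - r) := by nlinarith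
  have hD' := hD.ne'
  have hb0 : 0 ≤ (1 - (N : ℝ) * r) ^ (n + 2) := pow_nonneg hNr0 _
  have hab : (1 - (N : ℝ) * r) ^ (n + 2) ≤ (1 - r) ^ (n + 2) :=
    pow_le_pow_left₀ hNr0 hNr1 _
  have hc : (0:ℝ) ≤ (n : ℝ) * ρ + 1 := by positivity
  have hN1 : (2:ℝ) ≤ (N : ℝ) := by exact_mod_cast hN
  have hkey : 0 ≤ ((n : ℝ) * ρ + 1) * (1 - (N : ℝ) * r) ^ (n + 2) * (1 - ρ) *
      (r * ((N : ℝ) - 1)) := by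
    apply mul_nonneg
    · apply mul_nonneg (mul_nonneg hc hb0); linarith
    · apply mul_nonneg hr.le; linarith
  have h1 : W (n + 1) - W n ≥
      ((n : ℝ) * ρ + 1) * (ρ / (1 - (1 - ρ) * (1 - r))) *
        ((1 - r) ^ (n + 2) - (1 - N * r) ^ (n + 2)) := by
    rw [hW n, ge_iff_le, ← sub_nonneg]
    have : (((n : ℝ) * ρ + 1) * ((1 - r) ^ (n + 2) - (1 - N * r) ^ (n + 2)) +
      ((n : ℝ) * ρ + 1) * (1 - ρ) * r / (1 - (1 - ρ) * (1 - r)) *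
        ((N : ℝ) * (1 - N * r) ^ (n + 2) - (1 - r) ^ (n + 2))) -
      ((n : ℝ) * ρ + 1) * (ρ / (1 - (1 - ρ) * (1 - r))) *
        ((1 - r) ^ (n + 2) - (1 - N * r) ^ (n + 2)) =
      (((n : ℝ) * ρ + 1) * (1 - (N : ℝ) * r) ^ (n + 2) * (1 - ρ) *
        (r * ((N : ℝ) - 1))) / (1 - (1 - ρ) * (1 - r)) := by
      rw [eq_div_iff hD', sub_mul, add_mul, div_mul_eq_mul_div, div_mul_cancel₀ _ hD']
      linear_combination (-(((n : ℝ) * ρ + 1) * ((1 - r) ^ (n + 2) - (1 - N * r) ^ (n + 2)))) * div_mul_cancel₀ ρ hD'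
    rw [this]
    positivity
  have h2 : ((n : ℝ) * ρ + 1) * (ρ / (1 - (1 - ρ) * (1 - r))) *
      ((1 - r) ^ (n + 2) - (1 - N * r) ^ (n + 2)) ≥ 0 := by
    apply mul_nonneg (mul_nonneg hc (by positivity)); linarith
  exact ⟨h1, h2, by linarith⟩
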